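/- Let D = {d₁, …, d_k} be a finite set of k ≥ 2 distinct real numbers with Σ_{j=1}^k d_j = 0, and let ℙ be the product probability measure on Ω = D^ℕ (each coordinate uniform on D). Then ℙ({(aₙ) : lim_{x→1⁻} Σ_{n=1}^∞ aₙ xⁿ = +∞}) ≤ 1 − 1/k and ℙ({(aₙ) : lim_{x→1⁻} Σ_{n=1}^∞ aₙ xⁿ = −∞}) ≤ 1 − 1/k. -/

import Mathlib

open MeasureTheory ProbabilityTheory Filter Topology Set ENNReal

noncomputable def psum (q : ℝ) (a : ℕ → ℝ) : ℝ :=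
  Filter.liminf (fun N => ∑ n ∈ Finset.range N, a n * q ^ (n + 1)) Filter.atTop

lemma measurable_psum (q : ℝ) : Measurable (psum q) := by
  apply Measurable.liminf
  intro N
  exact Finset.measurable_sum _ fun n _ => (measurable_pi_apply n).mul_const _

lemma summable_aux {C x : ℝ} {a : ℕ → ℝ} (hC : ∀ n, |a n| ≤ C) (h0 : 0 ≤ x) (h1 : x < 1) :
    Summable (fun n => a n * x ^ (n + 1)) := by
  have hC0 : 0 ≤ C := le_trans (abs_nonneg _) (hC 0)
  apply Summable.of_norm_bounded (g := fun n => C * x ^ n)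
    ((summable_geometric_of_lt_one h0 h1).mul_left C)
  intro n
  have : |a n * x ^ (n + 1)| ≤ C * x ^ (n + 1) := by
    rw [abs_mul, abs_pow, abs_of_nonneg h0]
    exact mul_le_mul_of_nonneg_right (hC n) (pow_nonneg h0 _)
  refine this.trans ?_
  have : x ^ (n + 1) ≤ x ^ n := pow_le_pow_of_le_one h0 h1.le (Nat.le_succ n)
  exact mul_le_mul_of_nonneg_left this hC0

lemma psum_eq {q : ℝ} {a : ℕ → ℝ} (h : Summable (fun n => a n * q ^ (n + 1))) :
    psum q a = ∑' n, a n * q ^ (n + 1) :=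
  h.hasSum.tendsto_sum_nat.liminf_eq

lemma continuousOn_F {C : ℝ} {a : ℕ → ℝ} (hC : ∀ n, |a n| ≤ C) {r : ℝ} (h0 : 0 ≤ r) (h1 : r < 1) :
    ContinuousOn (fun x : ℝ => ∑' n, a n * x ^ (n + 1)) (Icc 0 r) := by
  have hC0 : 0 ≤ C := le_trans (abs_nonneg _) (hC 0)
  apply continuousOn_tsum (u := fun n => C * r ^ n)
    (fun n => (continuous_const.mul (continuous_pow _)).continuousOn)
    ((summable_geometric_of_lt_one h0 h1).mul_left C)
  intro n x hx
  show ‖a n * x ^ (n + 1)‖ ≤ C * r ^ n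
  rw [Real.norm_eq_abs, abs_mul, abs_pow, abs_of_nonneg hx.1]
  calc |a n| * x ^ (n + 1) ≤ C * r ^ (n + 1) :=
        mul_le_mul (hC n) (pow_le_pow_left₀ hx.1 hx.2 _) (pow_nonneg hx.1 _) hC0
    _ ≤ C * r ^ n := mul_le_mul_of_nonneg_left
        (pow_le_pow_of_le_one h0 h1.le (Nat.le_succ n)) hC0

/-- key pointwise equivalence, `atTop` version -/
lemma mem_iff_tendsto {C : ℝ} {a : ℕ → ℝ} (hC : ∀ n, |a n| ≤ C) :
    (∀ M : ℕ, ∃ j : ℕ, ∀ q : ℚ, 1 - 1 / (j + 1) < (q : ℝ) → (q : ℝ) < 1 → (M : ℝ) ≤ psum q a)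
    ↔ Tendsto (fun x : ℝ => ∑' n, a n * x ^ (n + 1)) (𝓝[<] (1 : ℝ)) atTop := by
  constructor
  · intro h
    rw [tendsto_atTop]
    intro b
    obtain ⟨M, hM⟩ := exists_nat_ge b
    obtain ⟨j, hj⟩ := h M
    have hc0 : (0 : ℝ) ≤ 1 - 1 / (j + 1) := by
      have : (1 : ℝ) / (j + 1) ≤ 1 := by
        rw [div_le_one (by positivity)]
        simp
      linarith
    have hc1 : (1 : ℝ) - 1 / (j + 1) < 1 := by
      have : (0 : ℝ) < 1 / (j + 1) := by positivity
      linarith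
    filter_upwards [Ioo_mem_nhdsLT hc1] with x hx
    refine hM.trans ?_
    -- x ∈ Ioo (1 - 1/(j+1)) 1, show M ≤ F a x
    set c : ℝ := 1 - 1 / (j + 1) with hc
    have hx0 : 0 < x := lt_of_le_of_lt hc0 hx.1
    -- rational sequence tending to x
    have hq : ∀ m : ℕ, ∃ q : ℚ, max c (x - 1 / (m + 1)) < (q : ℝ) ∧ (q : ℝ) < x := by
      intro m
      apply exists_rat_btwn
      apply max_lt hx.1
      have : (0 : ℝ) < 1 / (m + 1) := by positivity
      linarith
    choose q hq1 hq2 using hq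
    have hqx : Tendsto (fun m => (q m : ℝ)) atTop (𝓝 x) := by
      apply tendsto_of_tendsto_of_tendsto_of_le_of_le
        (g := fun m : ℕ => x - 1 / (m + 1)) (h := fun _ => x)
      · have : Tendsto (fun m : ℕ => 1 / ((m : ℝ) + 1)) atTop (𝓝 0) :=
          tendsto_one_div_add_atTop_nhds_zero_nat
        simpa using (tendsto_const_nhds (x := x)).sub this
      · exact tendsto_const_nhds
      · exact fun m => (le_max_right _ _).trans (hq1 m).le
      · exact fun m => (hq2 m).le
    have hcont : ContinuousOn (fun y : ℝ => ∑' n, a n * y ^ (n + 1)) (Icc 0 x) :=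
      continuousOn_F hC hx0.le hx.2
    have hmem : ∀ m, (q m : ℝ) ∈ Icc (0 : ℝ) x :=
      fun m => ⟨le_trans hc0 ((le_max_left _ _).trans (hq1 m).le), (hq2 m).le⟩
    have htend : Tendsto (fun m => ∑' n, a n * (q m : ℝ) ^ (n + 1)) atTop
        (𝓝 (∑' n, a n * x ^ (n + 1))) := by
      have hxmem : x ∈ Icc (0 : ℝ) x := ⟨hx0.le, le_refl x⟩
      exact (hcont x hxmem).tendsto.comp
        (tendsto_nhdsWithin_of_tendsto_nhds_of_eventually_within _ hqx
          (Eventually.of_forall hmem))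
    refine ge_of_tendsto htend (Eventually.of_forall fun m => ?_)
    have h1 : c < (q m : ℝ) := (le_max_left _ _).trans_lt (hq1 m)
    have h2 : (q m : ℝ) < 1 := (hq2 m).trans hx.2
    have := hj (q m) h1 h2
    rwa [psum_eq (summable_aux hC (le_trans hc0 h1.le) h2)] at this
  · intro ht M
    have hev : ∀ᶠ x in 𝓝[<] (1 : ℝ), (M : ℝ) ≤ ∑' n, a n * x ^ (n + 1) :=
      ht.eventually_ge_atTop _
    obtain ⟨l, hl, hsub⟩ := mem_nhdsLT_iff_exists_Ioo_subset.mp hev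
    obtain ⟨j, hj⟩ := exists_nat_one_div_lt (show (0 : ℝ) < 1 - l by simp at hl; linarith)
    refine ⟨j, fun qq hq1 hq2 => ?_⟩
    have hlq : l < (qq : ℝ) := by
      have : (1 : ℝ) / (j + 1) < 1 - l := hj
      linarith
    have hq0 : (0 : ℝ) ≤ qq := by
      have : (0:ℝ) ≤ 1 - 1/(j+1) := by
        have : (1 : ℝ) / (j + 1) ≤ 1 := by
          rw [div_le_one (by positivity)]; simp
        linarith
      linarith
    rw [psum_eq (summable_aux hC hq0 hq2)]
    exact hsub ⟨hlq, hq2⟩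

section Sigma

variable (D : Finset ℝ)

/-- a cyclic permutation of `D`, extended by the identity to all of `ℝ`. -/
noncomputable def sigmaD (x : ℝ) : ℝ :=
  if h : x ∈ D then
    haveI : NeZero D.card := ⟨fun hc => by
      rw [Finset.card_eq_zero] at hc; subst hc; simp at h⟩
    ((D.equivFin.symm (D.equivFin ⟨x, h⟩ + 1)) : ℝ)
  else x

variable [NeZero D.card]

lemma sigmaD_apply {x : ℝ} (h : x ∈ D) :
    sigmaD D x = ((D.equivFin.symm (D.equivFin ⟨x, h⟩ + 1)) : ℝ) := dif_pos h

lemma sigmaD_mem {x : ℝ} (h : x ∈ D) : sigmaD D x ∈ D := by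
  rw [sigmaD_apply D h]
  exact (D.equivFin.symm _).2

lemma measurable_sigmaD : Measurable (sigmaD D) := by
  classical
  have : sigmaD D = fun x => x + ∑ d ∈ D.attach,
      Set.indicator {((d : ℝ))} (fun _ => sigmaD D d - d) x := by
    funext x
    by_cases h : x ∈ D
    · rw [Finset.sum_eq_single ⟨x, h⟩]
      · simp
      · intro b _ hb
        apply Set.indicator_of_notMem
        simp only [Set.mem_singleton_iff]
        intro hxb
        exact hb (by ext; simp [hxb])
      · intro hmem; exact absurd (Finset.mem_attach _ _) hmem
    · have hx : sigmaD D x = x := dif_neg h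
      rw [hx]
      have : ∀ d ∈ D.attach, Set.indicator {((d : ℝ))} (fun _ => sigmaD D d - d) x = 0 := by
        intro d _
        apply Set.indicator_of_notMem
        simp only [Set.mem_singleton_iff]
        intro hxd; exact h (hxd ▸ d.2)
      rw [Finset.sum_congr rfl this]
      simp
  rw [this]
  exact measurable_id.add (Finset.measurable_sum _ fun d _ =>
    measurable_const.indicator (measurableSet_singleton _))

open Fin.NatCast in
lemma sigmaD_iterate {x : ℝ} (h : x ∈ D) (j : ℕ) :
    (sigmaD D)^[j] x = ((D.equivFin.symm (D.equivFin ⟨x, h⟩ + (j : Fin D.card))) : ℝ) := by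
  induction j with
  | zero => simp
  | succ j ih =>
    rw [Function.iterate_succ_apply', ih]
    have hmem : ((D.equivFin.symm (D.equivFin ⟨x, h⟩ + (j : Fin D.card))) : ℝ) ∈ D :=
      (D.equivFin.symm _).2
    rw [sigmaD_apply D hmem]
    congr 1
    have : (⟨_, hmem⟩ : {y // y ∈ D}) = D.equivFin.symm (D.equivFin ⟨x, h⟩ + (j : Fin D.card)) :=
      Subtype.ext rfl
    rw [this, Equiv.apply_symm_apply]
    rw [Nat.cast_add, Nat.cast_one, add_assoc]

lemma sigmaD_iterate_mem {x : ℝ} (h : x ∈ D) (j : ℕ) : (sigmaD D)^[j] x ∈ D := by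
  rw [sigmaD_iterate D h j]
  exact (D.equivFin.symm _).2

open Fin.NatCast in
lemma sigmaD_orbit_sum {x : ℝ} (h : x ∈ D) :
    ∑ j ∈ Finset.range D.card, (sigmaD D)^[j] x = ∑ d ∈ D, d := by
  have h1 : ∀ j ∈ Finset.range D.card, (sigmaD D)^[j] x
      = ((D.equivFin.symm (D.equivFin ⟨x, h⟩ + (j : Fin D.card))) : ℝ) :=
    fun j _ => sigmaD_iterate D h j
  rw [Finset.sum_congr rfl h1, ← Fin.sum_univ_eq_sum_range
    (fun j => ((D.equivFin.symm (D.equivFin ⟨x, h⟩ + ((j:ℕ) : Fin D.card))) : ℝ))]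
  simp only [Fin.cast_val_eq_self]
  calc ∑ j : Fin D.card, ((D.equivFin.symm (D.equivFin ⟨x, h⟩ + j)) : ℝ)
      = ∑ j : Fin D.card, ((D.equivFin.symm j) : ℝ) :=
        Fintype.sum_equiv (Equiv.addLeft (D.equivFin ⟨x, h⟩)) _ _ (fun j => rfl)
    _ = ∑ d : {y // y ∈ D}, (d : ℝ) :=
        Fintype.sum_equiv D.equivFin.symm _ _ (fun j => rfl)
    _ = ∑ d ∈ D, d := Finset.sum_coe_sort D (fun d => d)

end Sigma

section MeasurePart

variable (D : Finset ℝ) [NeZero D.card]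

noncomputable def muD : Measure ℝ := (D.card : ℝ≥0∞)⁻¹ • ∑ d ∈ D, Measure.dirac d

lemma muD_apply {s : Set ℝ} (hs : MeasurableSet s) :
    muD D s = (D.card : ℝ≥0∞)⁻¹ * ∑ d ∈ D, s.indicator 1 d := by
  rw [muD, Measure.smul_apply, Measure.finset_sum_apply, smul_eq_mul]
  congr 1
  exact Finset.sum_congr rfl fun d _ => Measure.dirac_apply' d hs

instance : IsProbabilityMeasure (muD D) := by
  constructor
  rw [muD_apply D MeasurableSet.univ]
  have : ∀ d ∈ D, (Set.univ : Set ℝ).indicator (1 : ℝ → ℝ≥0∞) d = 1 := by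
    intro d _; simp
  rw [Finset.sum_congr rfl this, Finset.sum_const, nsmul_eq_mul, mul_one]
  exact ENNReal.inv_mul_cancel (by exact_mod_cast (NeZero.ne D.card))
    (ENNReal.natCast_ne_top _)

lemma muD_map_sigmaD : (muD D).map (sigmaD D) = muD D := by
  ext s hs
  rw [Measure.map_apply (measurable_sigmaD D) hs,
    muD_apply D ((measurable_sigmaD D) hs), muD_apply D hs]
  congr 1
  have h1 : ∀ d ∈ D, (sigmaD D ⁻¹' s).indicator (1 : ℝ → ℝ≥0∞) d
      = s.indicator 1 (sigmaD D d) := by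
    intro d _
    by_cases h : sigmaD D d ∈ s <;> simp [Set.indicator, h]
  rw [Finset.sum_congr rfl h1,
    ← Finset.sum_coe_sort D (fun d => s.indicator (1 : ℝ → ℝ≥0∞) (sigmaD D d)),
    ← Finset.sum_coe_sort D (fun d => s.indicator (1 : ℝ → ℝ≥0∞) d)]
  exact Fintype.sum_equiv
    (D.equivFin.trans ((Equiv.addRight (1 : Fin D.card)).trans D.equivFin.symm))
    _ _ (fun d => by rw [sigmaD_apply D d.2]; rfl)

variable (P : Measure (ℕ → ℝ)) [IsProbabilityMeasure P]

lemma map_restrict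
    (hindep : iIndepFun (fun n (a : ℕ → ℝ) => a n) P)
    (hunif : ∀ n : ℕ, P.map (fun a => a n) = muD D) (s : Finset ℕ) :
    P.map (s.restrict) = Measure.pi (fun _ : s => muD D) := by
  classical
  refine (Measure.pi_eq fun t ht => ?_).symm
  rw [Measure.map_apply (Finset.measurable_restrict s) (MeasurableSet.univ_pi ht)]
  set sets : ℕ → Set ℝ := fun i => if h : i ∈ s then t ⟨i, h⟩ else Set.univ with hsets
  have hsm : ∀ i, MeasurableSet (sets i) := by
    intro i
    by_cases h : i ∈ s
    · simpa [hsets, h] using ht ⟨i, h⟩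
    · simp [hsets, h]
  have hpre : s.restrict ⁻¹' (Set.univ.pi t) = ⋂ i ∈ s, (fun a : ℕ → ℝ => a i) ⁻¹' sets i := by
    ext a
    simp only [mem_preimage, Set.mem_pi, mem_univ, forall_true_left, mem_iInter, Finset.restrict]
    constructor
    · intro h i hi
      have := h ⟨i, hi⟩
      simpa [hsets, hi] using this
    · intro h i
      have := h i.1 i.2
      simpa [hsets, i.2] using this
  rw [hpre, hindep.measure_inter_preimage_eq_mul s (fun i _ => hsm i)]
  have heach : ∀ i ∈ s, P ((fun a : ℕ → ℝ => a i) ⁻¹' sets i) = muD D (sets i) := by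
    intro i _
    rw [← Measure.map_apply (measurable_pi_apply i) (hsm i), hunif i]
  rw [Finset.prod_congr rfl heach, ← Finset.prod_coe_sort s (fun i => muD D (sets i))]
  exact Fintype.prod_congr _ _ fun i => by rw [hsets]; simp [i.2]

lemma map_Phi
    (hindep : iIndepFun (fun n (a : ℕ → ℝ) => a n) P)
    (hunif : ∀ n : ℕ, P.map (fun a => a n) = muD D) :
    P.map (fun a n => sigmaD D (a n)) = P := by
  have hΦ : Measurable (fun (a : ℕ → ℝ) (n : ℕ) => sigmaD D (a n)) :=
    measurable_pi_lambda _ fun n => (measurable_sigmaD D).comp (measurable_pi_apply n)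
  refine MeasureTheory.ext_of_generate_finite _ generateFrom_measurableCylinders.symm
    isPiSystem_measurableCylinders (fun t ht => ?_) ?_
  · obtain ⟨s, S, hS, rfl⟩ := (mem_measurableCylinders t).mp ht
    have hσs : Measurable (fun (y : s → ℝ) (i : s) => sigmaD D (y i)) :=
      measurable_pi_lambda _ fun i => (measurable_sigmaD D).comp (measurable_pi_apply i)
    have hinv : (Measure.pi (fun _ : s => muD D)).map (fun (y : s → ℝ) (i : s) => sigmaD D (y i))
        = Measure.pi (fun _ : s => muD D) := by
      refine (Measure.pi_eq fun u hu => ?_).symm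
      rw [Measure.map_apply hσs (MeasurableSet.univ_pi hu)]
      have hpre : (fun (y : s → ℝ) (i : s) => sigmaD D (y i)) ⁻¹' (Set.univ.pi u)
          = Set.univ.pi (fun i => sigmaD D ⁻¹' u i) := by
        ext y; simp
      rw [hpre, Measure.pi_pi]
      refine Finset.prod_congr rfl fun i _ => ?_
      rw [← Measure.map_apply (measurable_sigmaD D) (hu i), muD_map_sigmaD]
    rw [Measure.map_apply hΦ (hS.cylinder s)]
    have hcyl : (fun (a : ℕ → ℝ) (n : ℕ) => sigmaD D (a n)) ⁻¹' (cylinder s S)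
        = s.restrict ⁻¹' ((fun (y : s → ℝ) (i : s) => sigmaD D (y i)) ⁻¹' S) := rfl
    rw [hcyl, ← Measure.map_apply (Finset.measurable_restrict s) (hσs hS),
      map_restrict D P hindep hunif s, ← Measure.map_apply hσs hS, hinv]
    rw [show (cylinder s S : Set (ℕ → ℝ)) = s.restrict ⁻¹' S from rfl,
      ← Measure.map_apply (Finset.measurable_restrict s) hS, map_restrict D P hindep hunif s]
  · rw [Measure.map_apply hΦ MeasurableSet.univ]
    simp

lemma measurable_sigmaD_iter (j : ℕ) : Measurable ((sigmaD D)^[j]) := by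
  induction j with
  | zero => exact measurable_id
  | succ m ihm => rw [Function.iterate_succ']; exact (measurable_sigmaD D).comp ihm

lemma map_Phi_iter
    (hindep : iIndepFun (fun n (a : ℕ → ℝ) => a n) P)
    (hunif : ∀ n : ℕ, P.map (fun a => a n) = muD D) (j : ℕ) :
    P.map (fun a n => (sigmaD D)^[j] (a n)) = P := by
  induction j with
  | zero => simp [Measure.map_id]
  | succ j ih =>
    have hΦ : Measurable (fun (a : ℕ → ℝ) (n : ℕ) => sigmaD D (a n)) :=
      measurable_pi_lambda _ fun n => (measurable_sigmaD D).comp (measurable_pi_apply n)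
    have hΦj : Measurable (fun (a : ℕ → ℝ) (n : ℕ) => (sigmaD D)^[j] (a n)) := by
      exact measurable_pi_lambda _ fun n => (measurable_sigmaD_iter D j).comp (measurable_pi_apply n)
    have hcomp : (fun (a : ℕ → ℝ) (n : ℕ) => (sigmaD D)^[j+1] (a n))
        = (fun (a : ℕ → ℝ) (n : ℕ) => sigmaD D (a n))
          ∘ (fun (a : ℕ → ℝ) (n : ℕ) => (sigmaD D)^[j] (a n)) := by
      funext a n
      exact Function.iterate_succ_apply' _ _ _
    rw [hcomp, ← Measure.map_map hΦ hΦj, ih, map_Phi D P hindep hunif]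

end MeasurePart

section Bsets

/-- countable description of the divergence-to-`+∞` event -/
def Btop : Set (ℕ → ℝ) :=
  {a | ∀ M : ℕ, ∃ j : ℕ, ∀ q : ℚ,
    1 - 1 / ((j : ℝ) + 1) < (q : ℝ) → (q : ℝ) < 1 → (M : ℝ) ≤ psum q a}

/-- countable description of the divergence-to-`-∞` event -/
def Bbot : Set (ℕ → ℝ) :=
  {a | ∀ M : ℕ, ∃ j : ℕ, ∀ q : ℚ,
    1 - 1 / ((j : ℝ) + 1) < (q : ℝ) → (q : ℝ) < 1 → psum q a ≤ -(M : ℝ)}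

lemma c_nonneg (j : ℕ) : (0 : ℝ) ≤ 1 - 1 / ((j : ℝ) + 1) := by
  have h1 : (1 : ℝ) / ((j : ℝ) + 1) ≤ 1 := by
    rw [div_le_one (by positivity)]; simp
  linarith

lemma measurableSet_Btop : MeasurableSet Btop := by
  have : Btop = ⋂ M : ℕ, ⋃ j : ℕ, ⋂ q : ℚ,
      {a : ℕ → ℝ | 1 - 1 / ((j : ℝ) + 1) < (q : ℝ) → (q : ℝ) < 1 → (M : ℝ) ≤ psum q a} := by
    ext a; simp [Btop]
  rw [this]
  refine MeasurableSet.iInter fun M => MeasurableSet.iUnion fun j =>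
    MeasurableSet.iInter fun q => ?_
  by_cases h1 : 1 - 1 / ((j : ℝ) + 1) < (q : ℝ)
  · by_cases h2 : (q : ℝ) < 1
    · have : {a : ℕ → ℝ | 1 - 1 / ((j : ℝ) + 1) < (q : ℝ) → (q : ℝ) < 1 → (M : ℝ) ≤ psum q a}
          = {a : ℕ → ℝ | (M : ℝ) ≤ psum q a} := by
        ext a; simp only [Set.mem_setOf_eq]; tauto
      rw [this]
      exact measurableSet_le measurable_const (measurable_psum q)
    · have : {a : ℕ → ℝ | 1 - 1 / ((j : ℝ) + 1) < (q : ℝ) → (q : ℝ) < 1 → (M : ℝ) ≤ psum q a}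
          = Set.univ := by ext a; simp only [Set.mem_setOf_eq, Set.mem_univ, iff_true]; tauto
      rw [this]; exact MeasurableSet.univ
  · have : {a : ℕ → ℝ | 1 - 1 / ((j : ℝ) + 1) < (q : ℝ) → (q : ℝ) < 1 → (M : ℝ) ≤ psum q a}
        = Set.univ := by ext a; simp only [Set.mem_setOf_eq, Set.mem_univ, iff_true]; tauto
    rw [this]; exact MeasurableSet.univ

lemma measurableSet_Bbot : MeasurableSet Bbot := by
  have : Bbot = ⋂ M : ℕ, ⋃ j : ℕ, ⋂ q : ℚ,
      {a : ℕ → ℝ | 1 - 1 / ((j : ℝ) + 1) < (q : ℝ) → (q : ℝ) < 1 → psum q a ≤ -(M : ℝ)} := by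
    ext a; simp [Bbot]
  rw [this]
  refine MeasurableSet.iInter fun M => MeasurableSet.iUnion fun j =>
    MeasurableSet.iInter fun q => ?_
  by_cases h1 : 1 - 1 / ((j : ℝ) + 1) < (q : ℝ)
  · by_cases h2 : (q : ℝ) < 1
    · have : {a : ℕ → ℝ | 1 - 1 / ((j : ℝ) + 1) < (q : ℝ) → (q : ℝ) < 1 → psum q a ≤ -(M : ℝ)}
          = {a : ℕ → ℝ | psum q a ≤ -(M : ℝ)} := by
        ext a; simp only [Set.mem_setOf_eq]; tauto
      rw [this]
      exact measurableSet_le (measurable_psum q) measurable_const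
    · have : {a : ℕ → ℝ | 1 - 1 / ((j : ℝ) + 1) < (q : ℝ) → (q : ℝ) < 1 → psum q a ≤ -(M : ℝ)}
          = Set.univ := by ext a; simp only [Set.mem_setOf_eq, Set.mem_univ, iff_true]; tauto
      rw [this]; exact MeasurableSet.univ
  · have : {a : ℕ → ℝ | 1 - 1 / ((j : ℝ) + 1) < (q : ℝ) → (q : ℝ) < 1 → psum q a ≤ -(M : ℝ)}
        = Set.univ := by ext a; simp only [Set.mem_setOf_eq, Set.mem_univ, iff_true]; tauto
    rw [this]; exact MeasurableSet.univ

lemma mem_Btop_iff {C : ℝ} {a : ℕ → ℝ} (hC : ∀ n, |a n| ≤ C) :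
    a ∈ Btop ↔ Tendsto (fun x : ℝ => ∑' n, a n * x ^ (n + 1)) (𝓝[<] (1 : ℝ)) atTop :=
  mem_iff_tendsto hC

lemma mem_Bbot_iff {C : ℝ} {a : ℕ → ℝ} (hC : ∀ n, |a n| ≤ C) :
    a ∈ Bbot ↔ Tendsto (fun x : ℝ => ∑' n, a n * x ^ (n + 1)) (𝓝[<] (1 : ℝ)) atBot := by
  have hC' : ∀ n, |(fun m => -a m) n| ≤ C := fun n => by simpa using hC n
  have hneg : ∀ (j : ℕ) (q : ℚ), 1 - 1 / ((j : ℝ) + 1) < (q : ℝ) → (q : ℝ) < 1 →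
      psum q (fun m => -a m) = -psum q a := by
    intro j q h1 h2
    have h0 : (0 : ℝ) ≤ (q : ℝ) := le_trans (c_nonneg j) h1.le
    rw [psum_eq (summable_aux hC' h0 h2), psum_eq (summable_aux hC h0 h2)]
    rw [← tsum_neg]
    congr 1; funext n; ring
  have hiff : a ∈ Bbot ↔ (fun m => -a m) ∈ Btop := by
    constructor
    · intro h M
      obtain ⟨j, hj⟩ := h M
      exact ⟨j, fun q h1 h2 => by rw [hneg j q h1 h2]; linarith [hj q h1 h2]⟩
    · intro h M
      obtain ⟨j, hj⟩ := h M
      refine ⟨j, fun q h1 h2 => ?_⟩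
      have := hj q h1 h2
      rw [hneg j q h1 h2] at this
      linarith
  rw [hiff, mem_Btop_iff hC']
  have heq : (fun x : ℝ => ∑' n, (fun m => -a m) n * x ^ (n + 1))
      = fun x : ℝ => -(∑' n, a n * x ^ (n + 1)) := by
    funext x
    rw [← tsum_neg]
    congr 1; funext n; ring
  rw [heq]
  exact tendsto_neg_atTop_iff

end Bsets

section Counting

lemma no_all_top {k : ℕ} (hk : 0 < k) (g : ℕ → ℝ → ℝ)
    (hg : ∀ j ∈ Finset.range k, Tendsto (g j) (𝓝[<] (1 : ℝ)) atTop)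
    (hzero : ∀ x ∈ Ioo (0 : ℝ) 1, ∑ j ∈ Finset.range k, g j x = 0) : False := by
  have h1 : ∀ᶠ x in 𝓝[<] (1 : ℝ), ∀ j ∈ Finset.range k, 1 ≤ g j x := by
    rw [eventually_all_finset]
    exact fun j hj => (hg j hj).eventually_ge_atTop 1
  have h2 : ∀ᶠ x in 𝓝[<] (1 : ℝ), x ∈ Ioo (0 : ℝ) 1 :=
    eventually_of_mem (Ioo_mem_nhdsLT one_pos) (fun x hx => hx)
  obtain ⟨x, hx1, hx2⟩ := (h1.and h2).exists
  have hle : (k : ℝ) ≤ ∑ j ∈ Finset.range k, g j x := by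
    calc (k : ℝ) = ∑ _j ∈ Finset.range k, (1 : ℝ) := by simp
      _ ≤ _ := Finset.sum_le_sum hx1
  rw [hzero x hx2] at hle
  have hkR : (0 : ℝ) < k := by exact_mod_cast hk
  linarith

lemma no_all_bot {k : ℕ} (hk : 0 < k) (g : ℕ → ℝ → ℝ)
    (hg : ∀ j ∈ Finset.range k, Tendsto (g j) (𝓝[<] (1 : ℝ)) atBot)
    (hzero : ∀ x ∈ Ioo (0 : ℝ) 1, ∑ j ∈ Finset.range k, g j x = 0) : False := by
  refine no_all_top hk (fun j x => -(g j x)) (fun j hj => tendsto_neg_atTop_iff.mpr (hg j hj))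
    (fun x hx => ?_)
  show ∑ j ∈ Finset.range k, -(g j x) = 0
  rw [Finset.sum_neg_distrib, hzero x hx, neg_zero]

lemma endgame {k : ℕ} (hk : 2 ≤ k) {p : ℝ≥0∞} (hp : p ≤ 1)
    (h : p ≤ ((k - 1 : ℕ) : ℝ≥0∞) * (1 - p)) : p ≤ 1 - 1 / (k : ℝ≥0∞) := by
  have hk0 : (k : ℝ≥0∞) ≠ 0 := by
    simp only [ne_eq, Nat.cast_eq_zero]; omega
  have hkt : (k : ℝ≥0∞) ≠ ⊤ := ENNReal.natCast_ne_top k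
  have hcast : ((k - 1 : ℕ) : ℝ≥0∞) + 1 = (k : ℝ≥0∞) := by
    rw [← Nat.cast_succ]
    congr 1
    omega
  have hmul : (k : ℝ≥0∞) * p ≤ ((k - 1 : ℕ) : ℝ≥0∞) := by
    calc (k : ℝ≥0∞) * p = ((k - 1 : ℕ) : ℝ≥0∞) * p + p := by
          rw [← hcast, add_mul, one_mul]
      _ ≤ ((k - 1 : ℕ) : ℝ≥0∞) * p + ((k - 1 : ℕ) : ℝ≥0∞) * (1 - p) := add_le_add_right h _
      _ = ((k - 1 : ℕ) : ℝ≥0∞) * (p + (1 - p)) := by rw [mul_add]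
      _ = ((k - 1 : ℕ) : ℝ≥0∞) := by rw [add_tsub_cancel_of_le hp, mul_one]
  have hdiv : p ≤ ((k - 1 : ℕ) : ℝ≥0∞) / (k : ℝ≥0∞) := by
    rw [ENNReal.le_div_iff_mul_le (Or.inl hk0) (Or.inl hkt), mul_comm]
    exact hmul
  refine hdiv.trans_eq ?_
  refine (ENNReal.sub_eq_of_eq_add ((ENNReal.div_lt_top ENNReal.one_ne_top hk0).ne) ?_).symm
  rw [ENNReal.div_add_div_same, hcast, ENNReal.div_self hk0 hkt]

end Counting

section Main

variable (D : Finset ℝ) [NeZero D.card]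

def Gset : Set (ℕ → ℝ) := {a | ∀ n, a n ∈ D}

lemma measurableSet_Gset : MeasurableSet (Gset D) := by
  have : Gset D = ⋂ n : ℕ, (fun a : ℕ → ℝ => a n) ⁻¹' (D : Set ℝ) := by
    ext a; simp [Gset]
  rw [this]
  exact MeasurableSet.iInter fun n => (measurable_pi_apply n) D.measurableSet

lemma Gset_mem_iter {a : ℕ → ℝ} (ha : a ∈ Gset D) (j : ℕ) :
    (fun n => (sigmaD D)^[j] (a n)) ∈ Gset D :=
  fun n => sigmaD_iterate_mem D (ha n) j

variable (P : Measure (ℕ → ℝ)) [IsProbabilityMeasure P]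

lemma Gset_compl_null (hunif : ∀ n : ℕ, P.map (fun a => a n) = muD D) :
    P (Gset D)ᶜ = 0 := by
  have hsub : (Gset D)ᶜ ⊆ ⋃ n : ℕ, ((fun a : ℕ → ℝ => a n) ⁻¹' (D : Set ℝ))ᶜ := by
    intro a ha
    obtain ⟨n, hn⟩ := not_forall.mp ha
    exact Set.mem_iUnion.mpr ⟨n, hn⟩
  refine measure_mono_null hsub (measure_iUnion_null fun n => ?_)
  have h1 : P ((fun a : ℕ → ℝ => a n) ⁻¹' (D : Set ℝ)) = 1 := by
    rw [← Measure.map_apply (measurable_pi_apply n) D.measurableSet, hunif n,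
      muD_apply D D.measurableSet]
    have : ∀ d ∈ D, (↑D : Set ℝ).indicator (1 : ℝ → ℝ≥0∞) d = 1 := fun d hd => by simp [hd]
    rw [Finset.sum_congr rfl this, Finset.sum_const, nsmul_eq_mul, mul_one]
    exact ENNReal.inv_mul_cancel (by exact_mod_cast (NeZero.ne D.card))
      (ENNReal.natCast_ne_top _)
  exact (prob_compl_eq_zero_iff ((measurable_pi_apply n) D.measurableSet)).2 h1

lemma counting (hD : 2 ≤ D.card)
    (hindep : iIndepFun (fun n (a : ℕ → ℝ) => a n) P)
    (hunif : ∀ n : ℕ, P.map (fun a => a n) = muD D)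
    (B : Set (ℕ → ℝ)) (hBm : MeasurableSet B)
    (hB : ∀ a ∈ Gset D, a ∈ B →
      ∃ j, j ∈ Finset.range D.card ∧ j ≠ 0 ∧ (fun n => (sigmaD D)^[j] (a n)) ∉ B) :
    P B ≤ 1 - 1 / (D.card : ℝ≥0∞) := by
  classical
  have hΦj : ∀ j : ℕ, Measurable (fun (a : ℕ → ℝ) (n : ℕ) => (sigmaD D)^[j] (a n)) :=
    fun j => measurable_pi_lambda _ fun n =>
      (measurable_sigmaD_iter D j).comp (measurable_pi_apply n)
  have hsub : B ∩ Gset D ⊆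
      ⋃ j ∈ Finset.range D.card \ {0}, (fun (a : ℕ → ℝ) (n : ℕ) => (sigmaD D)^[j] (a n)) ⁻¹' Bᶜ := by
    rintro a ⟨haB, haG⟩
    obtain ⟨j, hj, hj0, hnot⟩ := hB a haG haB
    exact Set.mem_iUnion₂.mpr ⟨j, Finset.mem_sdiff.mpr ⟨hj, by simpa using hj0⟩, hnot⟩
  have hPBG : P B ≤ P (B ∩ Gset D) := by
    have heq := measure_inter_add_diff (μ := P) B (measurableSet_Gset D)
    have hz : P (B \ Gset D) = 0 :=
      measure_mono_null (fun a ha => ha.2) (Gset_compl_null D P hunif)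
    rw [← heq, hz, add_zero]
  have hcard : (Finset.range D.card \ {0}).card = D.card - 1 := by
    rw [Finset.card_sdiff_of_subset (Finset.singleton_subset_iff.mpr (Finset.mem_range.mpr (by omega)))]
    simp
  have hle : P B ≤ ((D.card - 1 : ℕ) : ℝ≥0∞) * (1 - P B) := by
    calc P B ≤ P (B ∩ Gset D) := hPBG
      _ ≤ ∑ j ∈ Finset.range D.card \ {0},
            P ((fun (a : ℕ → ℝ) (n : ℕ) => (sigmaD D)^[j] (a n)) ⁻¹' Bᶜ) :=
          (measure_mono hsub).trans (measure_biUnion_finset_le _ _)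
      _ = ∑ _j ∈ Finset.range D.card \ {0}, (1 - P B) := by
          refine Finset.sum_congr rfl fun j _ => ?_
          rw [← Measure.map_apply (hΦj j) hBm.compl, map_Phi_iter D P hindep hunif j,
            prob_compl_eq_one_sub hBm]
      _ = ((D.card - 1 : ℕ) : ℝ≥0∞) * (1 - P B) := by
          rw [Finset.sum_const, hcard, nsmul_eq_mul]
  exact endgame hD prob_le_one hle

end Main

/-- If the elements of `D` (of cardinality `k ≥ 2`) sum to zero, then the probability that
`lim_{x→1⁻} ∑ aₙ xⁿ = +∞`, as well as the probability that `lim_{x→1⁻} ∑ aₙ xⁿ = -∞`,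
is at most `1 - 1/k`. -/
theorem divergence_probability_le_one_sub_inv_card
(D : Finset ℝ) (hD : 2 ≤ D.card)
    (P : Measure (ℕ → ℝ)) [IsProbabilityMeasure P]
    (hindep : iIndepFun (fun n (a : ℕ → ℝ) => a n) P)
    (hunif : ∀ n : ℕ,
      P.map (fun a => a n) = (D.card : ℝ≥0∞)⁻¹ • ∑ d ∈ D, Measure.dirac d)
    (hsum : ∑ d ∈ D, d = 0) :
    P {a : ℕ → ℝ |
        Tendsto (fun x : ℝ => ∑' n : ℕ, a n * x ^ (n + 1)) (𝓝[<] (1 : ℝ)) atTop}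
      ≤ 1 - 1 / (D.card : ℝ≥0∞) ∧
    P {a : ℕ → ℝ |
        Tendsto (fun x : ℝ => ∑' n : ℕ, a n * x ^ (n + 1)) (𝓝[<] (1 : ℝ)) atBot}
      ≤ 1 - 1 / (D.card : ℝ≥0∞) := by
  have hk0 : D.card ≠ 0 := by omega
  haveI : NeZero D.card := ⟨hk0⟩
  have hDne : D.Nonempty := Finset.card_pos.mp (by omega)
  set C : ℝ := D.sup' hDne (fun d => |d|) with hCdef
  have hCb : ∀ y ∈ D, |y| ≤ C := fun y hy => Finset.le_sup' _ hy
  have hunif' : ∀ n : ℕ, P.map (fun a => a n) = muD D := fun n => hunif n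
  have hGiter : ∀ {a : ℕ → ℝ}, a ∈ Gset D → ∀ j : ℕ, (fun n => (sigmaD D)^[j] (a n)) ∈ Gset D :=
    fun ha j => Gset_mem_iter D ha j
  have hzero : ∀ a ∈ Gset D, ∀ x ∈ Ioo (0 : ℝ) 1,
      ∑ j ∈ Finset.range D.card, (∑' n : ℕ, (sigmaD D)^[j] (a n) * x ^ (n + 1)) = 0 := by
    intro a haG x hx
    rw [← Summable.tsum_finsetSum (fun j _ => summable_aux (C := C)
      (fun n => hCb _ (hGiter haG j n)) hx.1.le hx.2)]
    have hterm : ∀ n : ℕ,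
        ∑ j ∈ Finset.range D.card, (sigmaD D)^[j] (a n) * x ^ (n + 1) = 0 := by
      intro n
      rw [← Finset.sum_mul, sigmaD_orbit_sum D (haG n), hsum, zero_mul]
    calc ∑' n : ℕ, ∑ j ∈ Finset.range D.card, (sigmaD D)^[j] (a n) * x ^ (n + 1)
        = ∑' _n : ℕ, (0 : ℝ) := tsum_congr hterm
      _ = 0 := tsum_zero
  have key : ∀ (E B : Set (ℕ → ℝ)), MeasurableSet B →
      (∀ b : ℕ → ℝ, (∀ n, |b n| ≤ C) → (b ∈ B ↔ b ∈ E)) →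
      (∀ a ∈ Gset D, (∀ j ∈ Finset.range D.card, (fun n => (sigmaD D)^[j] (a n)) ∈ E) → False) →
      P E ≤ 1 - 1 / (D.card : ℝ≥0∞) := by
    intro E B hBm hmem hno
    have hB : ∀ a ∈ Gset D, a ∈ B →
        ∃ j, j ∈ Finset.range D.card ∧ j ≠ 0 ∧ (fun n => (sigmaD D)^[j] (a n)) ∉ B := by
      intro a haG haB
      by_contra hcon
      push_neg at hcon
      apply hno a haG
      intro j hj
      rcases eq_or_ne j 0 with rfl | hne
      · have : a ∈ E := (hmem a (fun n => hCb _ (haG n))).mp haB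
        simpa [Function.iterate_zero_apply] using this
      · exact (hmem _ (fun n => hCb _ (hGiter haG j n))).mp (hcon j hj hne)
    refine le_trans ?_ (counting D P hD hindep hunif' B hBm hB)
    have hEG : E ∩ Gset D ⊆ B := fun a ha =>
      (hmem a (fun n => hCb _ (ha.2 n))).mpr ha.1
    calc P E ≤ P ((E ∩ Gset D) ∪ (Gset D)ᶜ) := measure_mono (fun a ha => by
          by_cases h : a ∈ Gset D
          · exact Or.inl ⟨ha, h⟩
          · exact Or.inr h)
      _ ≤ P (E ∩ Gset D) + P (Gset D)ᶜ := measure_union_le _ _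
      _ = P (E ∩ Gset D) := by rw [Gset_compl_null D P hunif', add_zero]
      _ ≤ P B := measure_mono hEG
  constructor
  · refine key _ Btop measurableSet_Btop (fun b hb => mem_Btop_iff hb) ?_
    intro a haG hall
    exact no_all_top (k := D.card) (by omega)
      (fun j x => ∑' n : ℕ, (sigmaD D)^[j] (a n) * x ^ (n + 1))
      (fun j hj => hall j hj) (hzero a haG)
  · refine key _ Bbot measurableSet_Bbot (fun b hb => mem_Bbot_iff hb) ?_
    intro a haG hall
    exact no_all_bot (k := D.card) (by omega)
      (fun j x => ∑' n : ℕ, (sigmaD D)^[j] (a n) * x ^ (n + 1))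
      (fun j hj => hall j hj) (hzero a haG)
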